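/- arXiv:1907.09219 — 12 statements merged into one kernel-verified Lean document; each statement's English description precedes it below -/
import Mathlib

section
/- Let n ≥ 1, ε > 0, and let u, v : {0,1,...,n+1} → ℝ. Suppose that for every i with 1 ≤ i ≤ n we have min(u i - min(u (i-1), u (i+1)) - ε, u i - (u (i-1) + u (i+1))/2) ≤ 0 and min(v i - min(v (i-1), v (i+1)) - ε, v i - (v (i-1) + v (i+1))/2) ≥ 0. If u 0 ≤ v 0 and u (n+1) ≤ v (n+1), then u i ≤ v i for all 0 ≤ i ≤ n+1. -/
theorem stmt_0 (n : ℕ) (hn : 1 ≤ n) (ε : ℝ) (hε : 0 < ε) (u v : ℕ → ℝ)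
    (hu : ∀ i, 1 ≤ i → i ≤ n →
      min (u i - min (u (i-1)) (u (i+1)) - ε) (u i - (u (i-1) + u (i+1)) / 2) ≤ 0)
    (hv : ∀ i, 1 ≤ i → i ≤ n →
      0 ≤ min (v i - min (v (i-1)) (v (i+1)) - ε) (v i - (v (i-1) + v (i+1)) / 2))
    (h0 : u 0 ≤ v 0) (hN : u (n+1) ≤ v (n+1)) :
    ∀ i ≤ n+1, u i ≤ v i := by
  classical
  by_contra hcon
  push_neg at hcon
  obtain ⟨i₁, hi₁, hwi₁⟩ := hcon
  obtain ⟨j, hj, hjmax⟩ := Finset.exists_max_image (Finset.range (n+2))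
    (fun i => u i - v i) ⟨0, by simp⟩
  set M := u j - v j with hMdef
  have hwle : ∀ i, i ≤ n+1 → u i - v i ≤ M := fun i hi =>
    hjmax i (Finset.mem_range.mpr (by omega))
  have hMpos : 0 < M := lt_of_lt_of_le (by linarith) (hwle i₁ hi₁)
  have hP : ∃ i, i ≤ n+1 ∧ u i - v i = M :=
    ⟨j, by have := Finset.mem_range.mp hj; omega, rfl⟩
  obtain ⟨m, h1n, hM0, hprev⟩ :
      ∃ m, m + 1 ≤ n ∧ u (m+1) - v (m+1) = M ∧ u m - v m < M := by
    set i₀ := Nat.find hP with hi₀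
    have hspec := Nat.find_spec hP
    rw [← hi₀] at hspec
    have h1 : 1 ≤ i₀ := by
      by_contra h
      have h0' : i₀ = 0 := by omega
      rw [h0'] at hspec
      linarith [hspec.2]
    have hn' : i₀ ≤ n := by
      by_contra h
      have : i₀ = n + 1 := by omega
      rw [this] at hspec
      linarith [hspec.2]
    refine ⟨i₀ - 1, by omega, ?_, ?_⟩
    · have e : i₀ - 1 + 1 = i₀ := by omega
      rw [e]; exact hspec.2
    · have hlt : i₀ - 1 < i₀ := by omega
      have hnot := Nat.find_min hP hlt
      have hle := hwle (i₀ - 1) (by omega)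
      rcases lt_or_eq_of_le hle with h | h
      · exact h
      · exact absurd ⟨by omega, h⟩ hnot
  -- key induction: the maximum propagates rightward, and v drops by ε each step
  have key : ∀ k, (m+1+k ≤ n+1 → u (m+1+k) - v (m+1+k) = M) ∧
      (m+2+k ≤ n+1 → v (m+2+k) ≤ v (m+1+k) - ε) := by
    intro k
    induction k with
    | zero =>
      constructor
      · intro _
        have e : m + 1 + 0 = m + 1 := by omega
        rw [e]; exact hM0
      · intro hk
        have e2 : m + 2 + 0 = m + 2 := by omega
        have e1 : m + 1 + 0 = m + 1 := by omega
        rw [e1, e2]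
        by_contra hq
        push_neg at hq
        have hv1 := hv (m+1) (by omega) (by omega)
        have hu1 := hu (m+1) (by omega) (by omega)
        have e3 : m + 1 - 1 = m := by omega
        have e4 : m + 1 + 1 = m + 2 := by omega
        rw [e3, e4] at hv1 hu1
        obtain ⟨hv1a, hv1b⟩ := le_min_iff.mp hv1
        -- min (v m) (v (m+2)) ≤ v (m+1) - ε, and v (m+2) > v (m+1) - ε
        have hvm : v m ≤ v (m+1) - ε := by
          rcases min_le_iff.mp (show min (v m) (v (m+2)) ≤ v (m+1) - ε by linarith) with
            h | h
          · exact h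
          · linarith
        rcases min_le_iff.mp hu1 with h | h
        · -- u (m+1) ≤ min (u m) (u (m+2)) + ε ≤ u m + ε
          have := min_le_left (u m) (u (m+2))
          linarith
        · -- averages
          have hw2 := hwle (m+2) (by omega)
          linarith
    | succ k ih =>
      obtain ⟨ihP, ihQ⟩ := ih
      constructor
      · intro hk
        have e : m + 1 + (k+1) = (m+1+k) + 1 := by omega
        rw [e]
        have hkle : m+1+k ≤ n+1 := by omega
        have hQ := ihQ (by omega)
        have eq2 : m + 2 + k = (m+1+k) + 1 := by omega
        rw [eq2] at hQ
        have hPk := ihP hkle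
        have hwle2 := hwle ((m+1+k)+1) (by omega)
        have hu1 := hu (m+1+k) (by omega) (by omega)
        have hv1 := hv (m+1+k) (by omega) (by omega)
        have e3 : m + 1 + k - 1 = m + k := by omega
        rw [e3] at hu1 hv1
        obtain ⟨hv1a, hv1b⟩ := le_min_iff.mp hv1
        have hwle3 := hwle (m+k) (by omega)
        refine le_antisymm hwle2 ?_
        rcases min_le_iff.mp hu1 with h | h
        · -- u (i+1) ≥ min ≥ u i - ε, v (i+1) ≤ v i - ε
          have := min_le_right (u (m+k)) (u (m+1+k+1))
          linarith
        · -- averages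
          linarith
      · intro hk
        -- i := m+2+k = (m+1+k)+1, interior
        have eq1 : m + 2 + (k+1) = (m+2+k) + 1 := by omega
        have eq2 : m + 1 + (k+1) = m + 2 + k := by omega
        rw [eq1, eq2]
        have hQ := ihQ (by omega)
        have hv1 := hv (m+2+k) (by omega) (by omega)
        have e3 : m + 2 + k - 1 = m + 1 + k := by omega
        rw [e3] at hv1
        obtain ⟨hv1a, hv1b⟩ := le_min_iff.mp hv1
        rcases min_le_iff.mp
            (show min (v (m+1+k)) (v (m+2+k+1)) ≤ v (m+2+k) - ε by linarith) with
          h | h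
        · linarith
        · exact h
  have hfin := (key (n - m)).1 (by omega)
  have e : m + 1 + (n - m) = n + 1 := by omega
  rw [e] at hfin
  linarith
end

section
/- Let n ≥ 1, ε > 0, and F₀, F_{n+1} ∈ ℝ. There is at most one function u : {0,1,...,n+1} → ℝ with u 0 = F₀, u (n+1) = F_{n+1}, and u i = max(min(u (i-1), u (i+1)) + ε, (u (i-1) + u (i+1))/2) for all 1 ≤ i ≤ n. -/
private lemma comp_ttw (n : ℕ) (hn : 1 ≤ n) (ε : ℝ) (hε : 0 < ε)
    (u v : ℕ → ℝ)
    (h0 : u 0 ≤ v 0) (hN : u (n+1) ≤ v (n+1))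
    (hu : ∀ i, 1 ≤ i → i ≤ n →
      u i = max (min (u (i-1)) (u (i+1)) + ε) ((u (i-1) + u (i+1)) / 2))
    (hv : ∀ i, 1 ≤ i → i ≤ n →
      v i = max (min (v (i-1)) (v (i+1)) + ε) ((v (i-1) + v (i+1)) / 2)) :
    ∀ i ≤ n+1, u i ≤ v i := by
  classical
  by_contra hcon
  push_neg at hcon
  obtain ⟨i0, hi0, hgt⟩ := hcon
  have hne : (Finset.range (n+2)).Nonempty := ⟨0, by simp⟩
  set M : ℝ := (Finset.range (n+2)).sup' hne (fun k => u k - v k) with hM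
  have hwle : ∀ k, k ≤ n+1 → u k - v k ≤ M := by
    intro k hk
    exact Finset.le_sup' (fun k => u k - v k) (Finset.mem_range.mpr (by omega))
  have hMpos : 0 < M := lt_of_lt_of_le (sub_pos.mpr hgt) (hwle i0 hi0)
  -- the set of maximizers
  set S : Finset ℕ := (Finset.range (n+2)).filter (fun k => u k - v k = M) with hS
  have hSne : S.Nonempty := by
    obtain ⟨j, hj, hje⟩ := Finset.exists_mem_eq_sup' hne (fun k => u k - v k)
    exact ⟨j, Finset.mem_filter.mpr ⟨hj, hje.symm⟩⟩
  set i : ℕ := S.max' hSne with hi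
  have hiS : i ∈ S := S.max'_mem hSne
  obtain ⟨hiR, hieq⟩ := Finset.mem_filter.mp hiS
  have hile : i ≤ n + 1 := by have := Finset.mem_range.mp hiR; omega
  have hi1 : 1 ≤ i := by
    by_contra h
    have : i = 0 := by omega
    rw [this] at hieq
    linarith
  have hin : i ≤ n := by
    by_contra h
    have : i = n + 1 := by omega
    rw [this] at hieq
    linarith
  have hinext : u (i+1) - v (i+1) ≠ M := by
    intro h
    have : i + 1 ∈ S := Finset.mem_filter.mpr ⟨Finset.mem_range.mpr (by omega), h⟩
    have := S.le_max' _ this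
    omega
  -- the key propagation step
  have step : ∀ k, 1 ≤ k → k ≤ n → u k - v k = M → u (k+1) - v (k+1) ≤ M →
      (u (k+1) - v (k+1) = M → u (k+1) = u k + ε ∧ v (k+1) = v k + ε) →
      (u (k-1) - v (k-1) = M ∧ u k = u (k-1) + ε ∧ v k = v (k-1) + ε) := by
    intro k hk1 hkn hwk hwk1 hprop
    have huk := hu k hk1 hkn
    have hvk := hv k hk1 hkn
    have hwm : u (k-1) - v (k-1) ≤ M := hwle (k-1) (by omega)
    have hvmin : min (v (k-1)) (v (k+1)) + ε ≤ v k := by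
      rw [hvk]; exact le_max_left _ _
    have hvavg : (v (k-1) + v (k+1)) / 2 ≤ v k := by
      rw [hvk]; exact le_max_right _ _
    have huavg : (u (k-1) + u (k+1)) / 2 ≤ u k := by
      rw [huk]; exact le_max_right _ _
    rcases max_choice (min (u (k-1)) (u (k+1)) + ε) ((u (k-1) + u (k+1)) / 2) with hc | hc
    · -- Case B : u k = min + ε
      rw [hc] at huk
      rcases min_choice (v (k-1)) (v (k+1)) with hm | hm
      · -- min_v = v (k-1) : the good branch
        rw [hm] at hvmin
        have hmina : min (u (k-1)) (u (k+1)) ≤ u (k-1) := min_le_left _ _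
        have hkey : v (k-1) + M ≤ min (u (k-1)) (u (k+1)) := by linarith
        -- then u (k-1) = min = v (k-1) + M
        have h1 : u (k-1) - v (k-1) = M := by linarith
        have h2 : min (u (k-1)) (u (k+1)) = u (k-1) := le_antisymm hmina (by linarith)
        refine ⟨h1, by rw [huk, h2], by linarith⟩
      · -- min_v = v (k+1) : leads to contradiction
        exfalso
        rw [hm] at hvmin
        have hminb : min (u (k-1)) (u (k+1)) ≤ u (k+1) := min_le_right _ _
        have hkey : v (k+1) + M ≤ min (u (k-1)) (u (k+1)) := by linarith
        have hweq : u (k+1) - v (k+1) = M := by linarith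
        obtain ⟨he1, he2⟩ := hprop hweq
        -- min = u (k+1), so u k = u (k+1) + ε, but u (k+1) = u k + ε
        have h2 : min (u (k-1)) (u (k+1)) = u (k+1) := le_antisymm hminb (by linarith)
        rw [h2] at huk
        linarith
    · -- Case A : u k = average
      rw [hc] at huk
      have hA : M ≤ ((u (k-1) - v (k-1)) + (u (k+1) - v (k+1))) / 2 := by linarith
      have h1 : u (k-1) - v (k-1) = M := by linarith
      have h2 : u (k+1) - v (k+1) = M := by linarith
      obtain ⟨he1, he2⟩ := hprop h2
      have hveq : v k = (v (k-1) + v (k+1)) / 2 := by linarith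
      exact ⟨h1, by linarith, by linarith⟩
  -- downward induction from i
  have down : ∀ d, d ≤ i →
      (u (i-d) - v (i-d) = M ∧ u (i-d+1) - v (i-d+1) ≤ M ∧
        (u (i-d+1) - v (i-d+1) = M → u (i-d+1) = u (i-d) + ε ∧ v (i-d+1) = v (i-d) + ε)) := by
    intro d
    induction d with
    | zero =>
      intro _
      simp only [Nat.sub_zero]
      exact ⟨hieq, hwle (i+1) (by omega), fun h => absurd h hinext⟩
    | succ d ih =>
      intro hd
      obtain ⟨q1, q2, q3⟩ := ih (by omega)
      set k := i - d with hk
      have hk1 : 1 ≤ k := by omega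
      have hkn : k ≤ n := by omega
      obtain ⟨r1, r2, r3⟩ := step k hk1 hkn q1 q2 q3
      have e1 : i - (d+1) = k - 1 := by omega
      have e2 : k - 1 + 1 = k := by omega
      rw [e1, e2]
      exact ⟨r1, le_of_eq q1, fun _ => ⟨r2, r3⟩⟩
  obtain ⟨q1, _, _⟩ := down i le_rfl
  rw [Nat.sub_self] at q1
  linarith

theorem stmt_1 (n : ℕ) (hn : 1 ≤ n) (ε : ℝ) (hε : 0 < ε) (F0 FN : ℝ)
    (u v : ℕ → ℝ)
    (hu0 : u 0 = F0) (huN : u (n+1) = FN)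
    (hu : ∀ i, 1 ≤ i → i ≤ n →
      u i = max (min (u (i-1)) (u (i+1)) + ε) ((u (i-1) + u (i+1)) / 2))
    (hv0 : v 0 = F0) (hvN : v (n+1) = FN)
    (hv : ∀ i, 1 ≤ i → i ≤ n →
      v i = max (min (v (i-1)) (v (i+1)) + ε) ((v (i-1) + v (i+1)) / 2)) :
    ∀ i ≤ n+1, u i = v i := by
  intro i hi
  have h1 := comp_ttw n hn ε hε u v (by rw [hu0, hv0]) (by rw [huN, hvN]) hu hv i hi
  have h2 := comp_ttw n hn ε hε v u (by rw [hu0, hv0]) (by rw [huN, hvN]) hv hu i hi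
  linarith
end

section
/- Let n ≥ 1, ε > 0, and K ≥ 0. If u : {0,1,...,n+1} → ℝ satisfies u i = max(min(u (i-1), u (i+1)) + ε, (u (i-1) + u (i+1))/2) for all 1 ≤ i ≤ n, and |u 0| ≤ K, |u (n+1)| ≤ K, then for every 0 ≤ i ≤ n+1, ε · min(n+1-i, i) - K ≤ u i ≤ ε · min(n+1-i, i) + K. -/
theorem stmt_2 (n : ℕ) (hn : 1 ≤ n) (ε : ℝ) (hε : 0 < ε) (K : ℝ) (hK : 0 ≤ K)
    (u : ℕ → ℝ)
    (hu : ∀ i, 1 ≤ i → i ≤ n →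
      u i = max (min (u (i-1)) (u (i+1)) + ε) ((u (i-1) + u (i+1)) / 2))
    (h0 : |u 0| ≤ K) (hN : |u (n+1)| ≤ K) :
    ∀ i ≤ n+1,
      ε * min ((n:ℝ) + 1 - i) (i:ℝ) - K ≤ u i ∧
      u i ≤ ε * min ((n:ℝ) + 1 - i) (i:ℝ) + K := by
  obtain ⟨h0l, h0r⟩ := abs_le.mp h0
  obtain ⟨hNl, hNr⟩ := abs_le.mp hN
  have hmain : ∀ m, m + 1 ≤ n →
      u (m+1) = max (min (u m) (u (m+2)) + ε) ((u m + u (m+2)) / 2) := by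
    intro m hm
    have h := hu (m+1) (by omega) hm
    simpa using h
  -- concavity: differences are nonincreasing
  have hconc : ∀ m, m + 1 ≤ n → u (m+2) - u (m+1) ≤ u (m+1) - u m := by
    intro m hm
    have h2 : (u m + u (m+2)) / 2 ≤ u (m+1) := (hmain m hm) ▸ le_max_right _ _
    linarith
  have hmono : ∀ a b, a ≤ b → b ≤ n → u (b+1) - u b ≤ u (a+1) - u a := by
    intro a b
    induction b with
    | zero =>
      intro hab _
      have : a = 0 := Nat.le_zero.mp hab
      subst this; exact le_rfl
    | succ k ih =>
      intro hab hbn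
      rcases Nat.eq_or_lt_of_le hab with h | h
      · subst h; exact le_rfl
      · exact le_trans (hconc k hbn) (ih (by omega) (by omega))
  have hbranchA : ∀ m, m + 1 ≤ n → ε ≤ u (m+1) - u m ∨ u (m+2) - u (m+1) ≤ -ε := by
    intro m hm
    have h1 : min (u m) (u (m+2)) + ε ≤ u (m+1) := (hmain m hm) ▸ le_max_left _ _
    rcases le_total (u m) (u (m+2)) with h | h
    · left; rw [min_eq_left h] at h1; linarith
    · right; rw [min_eq_right h] at h1; linarith
  have hbranchB : ∀ m, m + 1 ≤ n →
      (u (m+1) - u m ≤ ε ∧ -ε ≤ u (m+2) - u (m+1)) ∨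
        u (m+1) - u m = u (m+2) - u (m+1) := by
    intro m hm
    rcases max_cases (min (u m) (u (m+2)) + ε) ((u m + u (m+2)) / 2) with ⟨h, _⟩ | ⟨h, _⟩
    · left
      have he := (hmain m hm).trans h
      constructor
      · have := min_le_left (u m) (u (m+2)); linarith
      · have := min_le_right (u m) (u (m+2)); linarith
    · right
      have he := (hmain m hm).trans h
      linarith
  have hC1 : u (n+1) - u n ≤ ε → ∀ j, j ≤ n → u (j+1) - u j ≤ ε := by
    intro hdn
    have key : ∀ k, k ≤ n → u ((n - k) + 1) - u (n - k) ≤ ε := by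
      intro k
      induction k with
      | zero => intro _; simpa using hdn
      | succ m ih =>
        intro hm
        have h1 : (n - (m+1)) + 1 ≤ n := by omega
        rcases hbranchB (n - (m+1)) h1 with h | h
        · exact h.1
        · have h2 : n - (m+1) + 1 = n - m := by omega
          have h3 : n - (m+1) + 2 = n - m + 1 := by omega
          rw [h, h3, h2]
          exact ih (by omega)
    intro j hj
    have := key (n - j) (by omega)
    have h4 : n - (n - j) = j := by omega
    rwa [h4] at this
  have hC2 : -ε ≤ u 1 - u 0 → ∀ j, j ≤ n → -ε ≤ u (j+1) - u j := by
    intro hd0 j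
    induction j with
    | zero => intro _; simpa using hd0
    | succ m ih =>
      intro hm
      rcases hbranchB m hm with h | h
      · exact h.2
      · rw [← h]; exact ih (by omega)
  have hsum1 : ∀ i : ℕ, ∑ j ∈ Finset.range i, (u (j+1) - u j) = u i - u 0 :=
    fun i => Finset.sum_range_sub u i
  have hsum2 : ∀ i, i ≤ n+1 → ∑ j ∈ Finset.Ico i (n+1), (u (j+1) - u j) = u (n+1) - u i := by
    intro i hi
    rw [Finset.sum_Ico_eq_sub _ hi, hsum1, hsum1]; ring
  intro i hi
  have hi0 : (0:ℝ) ≤ (i:ℝ) := Nat.cast_nonneg i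
  have hi1 : (i:ℝ) ≤ (n:ℝ) + 1 := by exact_mod_cast Nat.cast_le.mpr hi
  have hcard : ((Finset.Ico i (n+1)).card : ℝ) = (n:ℝ) + 1 - i := by
    rw [Nat.card_Ico, Nat.cast_sub hi]; push_cast; ring
  have hminle1 : min ((n:ℝ)+1-i) (i:ℝ) ≤ (i:ℝ) := min_le_right _ _
  have hminle2 : min ((n:ℝ)+1-i) (i:ℝ) ≤ (n:ℝ)+1-i := min_le_left _ _
  -- upper bound 1 : u i ≤ ε * i + K
  have hub1 : u i ≤ ε * i + K := by
    rcases le_or_gt (u (n+1) - u n) ε with hdn | hdn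
    · have hs : ∑ j ∈ Finset.range i, (u (j+1) - u j) ≤ (Finset.range i).card • ε :=
        Finset.sum_le_card_nsmul _ _ _ (fun j hj => hC1 hdn j (by
          simp only [Finset.mem_range] at hj; omega))
      rw [hsum1, Finset.card_range, nsmul_eq_mul] at hs
      nlinarith
    · have hs : (0:ℝ) ≤ ∑ j ∈ Finset.Ico i (n+1), (u (j+1) - u j) := by
        apply Finset.sum_nonneg
        intro j hj
        simp only [Finset.mem_Ico] at hj
        have := hmono j n (by omega) le_rfl
        linarith
      rw [hsum2 i hi] at hs
      nlinarith
  -- upper bound 2 : u i ≤ ε * (n+1-i) + K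
  have hub2 : u i ≤ ε * ((n:ℝ) + 1 - i) + K := by
    rcases le_or_gt (-ε) (u 1 - u 0) with hd0 | hd0
    · have hs : (Finset.Ico i (n+1)).card • (-ε) ≤ ∑ j ∈ Finset.Ico i (n+1), (u (j+1) - u j) :=
        Finset.card_nsmul_le_sum _ _ _ (fun j hj => by
          simp only [Finset.mem_Ico] at hj
          exact hC2 hd0 j (by omega))
      rw [hsum2 i hi, nsmul_eq_mul, hcard] at hs
      nlinarith
    · have hs : ∑ j ∈ Finset.range i, (u (j+1) - u j) ≤ 0 := by
        apply Finset.sum_nonpos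
        intro j hj
        simp only [Finset.mem_range] at hj
        have hj0 := hmono 0 j (Nat.zero_le _) (by omega)
        simp only [Nat.zero_add] at hj0
        linarith
      rw [hsum1] at hs
      have hnn : 0 ≤ ε * ((n:ℝ)+1-i) := mul_nonneg hε.le (by linarith)
      linarith
  refine ⟨?_, ?_⟩
  · -- lower bound
    rcases Nat.lt_or_ge i (n+1) with hilt | hige
    · by_cases hall : ∀ j, j < i → ε ≤ u (j+1) - u j
      · have hs : (Finset.range i).card • ε ≤ ∑ j ∈ Finset.range i, (u (j+1) - u j) :=
          Finset.card_nsmul_le_sum _ _ _ (fun j hj => hall j (Finset.mem_range.mp hj))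
        rw [hsum1, Finset.card_range, nsmul_eq_mul] at hs
        have hmm : ε * min ((n:ℝ)+1-i) (i:ℝ) ≤ ε * i :=
          mul_le_mul_of_nonneg_left hminle1 hε.le
        nlinarith
      · push_neg at hall
        obtain ⟨j, hji, hjd⟩ := hall
        have hj1 : j + 1 ≤ n := by omega
        have hstep : u (j+2) - u (j+1) ≤ -ε := by
          rcases hbranchA j hj1 with h | h
          · exact absurd h (not_le.mpr hjd)
          · exact h
        have hs : ∑ l ∈ Finset.Ico i (n+1), (u (l+1) - u l) ≤ (Finset.Ico i (n+1)).card • (-ε) :=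
          Finset.sum_le_card_nsmul _ _ _ (fun l hl => by
            simp only [Finset.mem_Ico] at hl
            have hm := hmono (j+1) l (by omega) (by omega)
            linarith)
        rw [hsum2 i hi, nsmul_eq_mul, hcard] at hs
        have hmm : ε * min ((n:ℝ)+1-i) (i:ℝ) ≤ ε * ((n:ℝ)+1-i) :=
          mul_le_mul_of_nonneg_left hminle2 hε.le
        nlinarith
    · have hieq : i = n + 1 := by omega
      subst hieq
      have hcast : ((n+1 : ℕ) : ℝ) = (n:ℝ) + 1 := by push_cast; ring
      rw [hcast, show (n:ℝ)+1-((n:ℝ)+1) = 0 by ring,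
        min_eq_left (by positivity)]
      linarith
  · rcases le_total ((n:ℝ)+1-i) (i:ℝ) with h | h
    · rw [min_eq_left h]; exact hub2
    · rw [min_eq_right h]; exact hub1
end

section
/- Let n ≥ 2, ε > 0, F₀ ≤ F_{n+1}, and set Q = (F_{n+1} - F₀)/ε. If Q > n+1, then the function u defined by u 0 = F₀, u (n+1) = F_{n+1}, and u i = ((n+1-i)/(n+1)) F₀ + (i/(n+1)) F_{n+1} for 1 ≤ i ≤ n satisfies u i = max(min(u (i-1), u (i+1)) + ε, (u (i-1)+u (i+1))/2) for all 1 ≤ i ≤ n. -/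
theorem stmt_4 (n : ℕ) (hn : 2 ≤ n) (ε : ℝ) (hε : 0 < ε) (F0 FN : ℝ) (hF : F0 ≤ FN)
    (hQ : (FN - F0) / ε > (n:ℝ) + 1)
    (u : ℕ → ℝ) (hu0 : u 0 = F0) (huN : u (n+1) = FN)
    (hudef : ∀ i, 1 ≤ i → i ≤ n →
      u i = (((n:ℝ) + 1 - i) / ((n:ℝ) + 1)) * F0 + ((i:ℝ) / ((n:ℝ) + 1)) * FN) :
    ∀ i, 1 ≤ i → i ≤ n →
      u i = max (min (u (i-1)) (u (i+1)) + ε) ((u (i-1) + u (i+1)) / 2) := by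
  set d : ℝ := (FN - F0) / ((n:ℝ) + 1) with hd
  have hn1 : (0:ℝ) < (n:ℝ) + 1 := by positivity
  have hεd : ε < d := by
    have h1 : ((n:ℝ) + 1) * ε < FN - F0 := by
      have := (lt_div_iff₀ hε).mp hQ
      linarith
    rw [hd, lt_div_iff₀ hn1]
    nlinarith
  have key : ∀ j, j ≤ n + 1 → u j = F0 + (j:ℝ) * d := by
    intro j hj
    rcases Nat.eq_zero_or_pos j with h0 | h1
    · simp [h0, hu0]
    rcases eq_or_lt_of_le hj with hN | hlt
    · rw [hN, huN]
      push_cast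
      rw [hd]
      field_simp
      ring
    · have hjn : j ≤ n := Nat.lt_succ_iff.mp hlt
      rw [hudef j h1 hjn, hd]
      field_simp
      ring
  intro i hi1 hin
  have e1 : u (i-1) = F0 + ((i:ℝ) - 1) * d := by
    rw [key (i-1) (by omega)]
    congr 1
    congr 1
    push_cast [Nat.cast_sub hi1]
    ring
  have e2 : u i = F0 + (i:ℝ) * d := key i (by omega)
  have e3 : u (i+1) = F0 + ((i:ℝ) + 1) * d := by
    rw [key (i+1) (by omega)]; push_cast; ring
  have hdpos : 0 < d := lt_trans hε hεd
  rw [e1, e2, e3]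
  rw [min_eq_left (by nlinarith)]
  rw [max_eq_right (by nlinarith)]
  ring
end

section
/- Let n ≥ 2, ε > 0, F₀ ≤ F_{n+1}, and set Q = (F_{n+1} - F₀)/ε. If n-1 < Q ≤ n+1, then the function u defined by u i = F₀ + i·ε for 0 ≤ i ≤ n and u (n+1) = F_{n+1} satisfies u i = max(min(u (i-1), u (i+1)) + ε, (u (i-1)+u (i+1))/2) for all 1 ≤ i ≤ n. -/
theorem stmt_5 (n : ℕ) (hn : 2 ≤ n) (ε : ℝ) (hε : 0 < ε) (F0 FN : ℝ) (hF : F0 ≤ FN)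
    (hQ1 : (n:ℝ) - 1 < (FN - F0) / ε) (hQ2 : (FN - F0) / ε ≤ (n:ℝ) + 1)
    (u : ℕ → ℝ) (hudef : ∀ i ≤ n, u i = F0 + (i:ℝ) * ε) (huN : u (n+1) = FN) :
    ∀ i, 1 ≤ i → i ≤ n →
      u i = max (min (u (i-1)) (u (i+1)) + ε) ((u (i-1) + u (i+1)) / 2) := by
  have hQ1' : F0 + ((n:ℝ) - 1) * ε < FN := by
    have h := hQ1; rw [lt_div_iff₀ hε] at h; linarith
  have hQ2' : FN ≤ F0 + ((n:ℝ) + 1) * ε := by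
    have := (div_le_iff₀ hε).mp hQ2; linarith
  intro i h1 h2
  rcases eq_or_lt_of_le h2 with rfl | hlt
  · -- i = n
    have hm1 : i - 1 ≤ i := Nat.sub_le _ _
    rw [hudef i le_rfl, hudef (i-1) (Nat.sub_le _ _), huN]
    have hc : ((i - 1 : ℕ) : ℝ) = (i : ℝ) - 1 := by
      have : 1 ≤ i := h1
      push_cast [this]; ring
    rw [hc]
    have hmin : min (F0 + ((i:ℝ) - 1) * ε) FN = F0 + ((i:ℝ) - 1) * ε :=
      min_eq_left (le_of_lt hQ1')
    rw [hmin]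
    have : (F0 + ((i:ℝ) - 1) * ε + FN) / 2 ≤ F0 + ((i:ℝ) - 1) * ε + ε := by linarith
    rw [max_eq_left this]; ring
  · -- i < n
    have hip : i + 1 ≤ n := hlt
    rw [hudef i h2, hudef (i-1) (le_trans (Nat.sub_le _ _) h2), hudef (i+1) hip]
    have hc : ((i - 1 : ℕ) : ℝ) = (i : ℝ) - 1 := by push_cast [h1]; ring
    rw [hc]
    push_cast
    have hmin : min (F0 + ((i:ℝ) - 1) * ε) (F0 + ((i:ℝ) + 1) * ε)
        = F0 + ((i:ℝ) - 1) * ε := min_eq_left (by nlinarith)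
    rw [hmin]
    have : (F0 + ((i:ℝ) - 1) * ε + (F0 + ((i:ℝ) + 1) * ε)) / 2
        = F0 + ((i:ℝ) - 1) * ε + ε := by ring
    rw [this, max_self]; ring
end

section
/- Let n ≥ 2, ε > 0, F₀ ≤ F_{n+1}, and let k be an integer with 1 ≤ k ≤ n-1. Set Q = (F_{n+1} - F₀)/ε and suppose 2k - n - 1 < Q ≤ 2k - n + 1. Then the function u defined by u 0 = F₀, u (n+1) = F_{n+1}, u i = F₀ + i·ε for 1 ≤ i ≤ k, and u i = F_{n+1} + (n+1-i)·ε for k+1 ≤ i ≤ n, satisfies u i = max(min(u (i-1), u (i+1)) + ε, (u (i-1)+u (i+1))/2) for all 1 ≤ i ≤ n. -/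
theorem stmt_6 (n : ℕ) (hn : 2 ≤ n) (ε : ℝ) (hε : 0 < ε) (F0 FN : ℝ) (hF : F0 ≤ FN)
    (k : ℕ) (hk1 : 1 ≤ k) (hk2 : k ≤ n - 1)
    (hQ1 : 2 * (k:ℝ) - n - 1 < (FN - F0) / ε) (hQ2 : (FN - F0) / ε ≤ 2 * (k:ℝ) - n + 1)
    (u : ℕ → ℝ) (hu0 : u 0 = F0) (huN : u (n+1) = FN)
    (hudef1 : ∀ i, 1 ≤ i → i ≤ k → u i = F0 + (i:ℝ) * ε)
    (hudef2 : ∀ i, k + 1 ≤ i → i ≤ n → u i = FN + ((n:ℝ) + 1 - i) * ε) :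
    ∀ i, 1 ≤ i → i ≤ n →
      u i = max (min (u (i-1)) (u (i+1)) + ε) ((u (i-1) + u (i+1)) / 2) := by
  have hkn : k + 1 ≤ n := by omega
  have hq1 : (2*(k:ℝ) - n - 1) * ε < FN - F0 := (lt_div_iff₀ hε).mp hQ1
  have hq2 : FN - F0 ≤ (2*(k:ℝ) - n + 1) * ε := (div_le_iff₀ hε).mp hQ2
  have hA : ∀ j, j ≤ k → u j = F0 + (j:ℝ) * ε := by
    intro j hj
    rcases Nat.eq_zero_or_pos j with h | h
    · subst h; simp [hu0]
    · exact hudef1 j h hj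
  have hB : ∀ j, k + 1 ≤ j → j ≤ n + 1 → u j = FN + ((n:ℝ) + 1 - j) * ε := by
    intro j hj1 hj2
    rcases eq_or_lt_of_le hj2 with h | h
    · subst h; rw [huN]; push_cast; ring
    · exact hudef2 j hj1 (by omega)
  intro i h1 h2
  rcases lt_trichotomy i k with hik | hik | hik
  · -- i < k
    have e1 : u (i-1) = F0 + ((i:ℝ)-1)*ε := by
      rw [hA (i-1) (by omega), Nat.cast_sub h1, Nat.cast_one]
    have e2 : u (i+1) = F0 + ((i:ℝ)+1)*ε := by
      rw [hA (i+1) (by omega)]; push_cast; ring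
    have e0 : u i = F0 + (i:ℝ)*ε := hA i (by omega)
    rw [e0, e1, e2, min_eq_left (by linarith), max_eq_left (by linarith)]
    ring
  · -- i = k
    subst hik
    have e1 : u (i-1) = F0 + ((i:ℝ)-1)*ε := by
      rw [hA (i-1) (by omega), Nat.cast_sub h1, Nat.cast_one]
    have e2 : u (i+1) = FN + ((i:ℝ)+(n:ℝ)+1-2*i-1)*ε := by
      rw [hB (i+1) (by omega) (by omega)]; push_cast; ring
    have e0 : u i = F0 + (i:ℝ)*ε := hA i le_rfl
    rw [e0, e1, e2, min_eq_left (by linarith), max_eq_left (by linarith)]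
    ring
  · -- i > k
    rcases eq_or_lt_of_le (show k + 1 ≤ i from hik) with h | h
    · -- i = k + 1
      have hik1 : i = k + 1 := h.symm
      subst hik1
      have e1 : u (k+1-1) = F0 + (k:ℝ)*ε := by
        simpa using hA k (le_refl k)
      have e2 : u (k+1+1) = FN + ((n:ℝ)-1-k)*ε := by
        rw [hB (k+2) (by omega) (by omega)]; push_cast; ring
      have e0 : u (k+1) = FN + ((n:ℝ)-k)*ε := by
        rw [hB (k+1) le_rfl (by omega)]; push_cast; ring
      rw [e0, e1, e2, min_eq_right (by linarith), max_eq_left (by linarith)]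
      ring
    · -- i ≥ k + 2
      have hik2 : k + 2 ≤ i := h
      have e1 : u (i-1) = FN + ((n:ℝ)+2-i)*ε := by
        rw [hB (i-1) (by omega) (by omega), Nat.cast_sub h1, Nat.cast_one]; ring
      have e2 : u (i+1) = FN + ((n:ℝ)-i)*ε := by
        rw [hB (i+1) (by omega) (by omega)]; push_cast; ring
      have e0 : u i = FN + ((n:ℝ)+1-i)*ε := hB i (by omega) (by omega)
      rw [e0, e1, e2, min_eq_right (by linarith), max_eq_left (by linarith)]
      ring
end

section
/- Let n ≥ 2, ε > 0, F₀ ≤ F_{n+1}, Q = (F_{n+1}-F₀)/ε, and suppose Q > n+1. Then for every k with 1 ≤ k ≤ n-1 and every pair of integers j₁, j₂ with 0 ≤ j₁ < j₂ ≤ n+1, there is exactly one function u : {0,...,n+1} → ℝ with u 0 = F₀, u (n+1) = F_{n+1} solving the DPP u i = max(min(u (i-1), u (i+1)) + ε, (u (i-1)+u (i+1))/2) for all 1 ≤ i ≤ n, and it is given by u i = ((n+1-i)/(n+1)) F₀ + (i/(n+1)) F_{n+1}. -/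
lemma stmt_7_uniq (n : ℕ) (ε : ℝ) (hε : 0 < ε) (F0 FN : ℝ)
    (hQ : (FN - F0) / ε > (n:ℝ) + 1) (u : ℕ → ℝ) (h0 : u 0 = F0) (hN : u (n+1) = FN)
    (hdpp : ∀ i, 1 ≤ i → i ≤ n →
      u i = max (min (u (i-1)) (u (i+1)) + ε) ((u (i-1) + u (i+1)) / 2)) :
    ∀ i ≤ n + 1,
      u i = (((n:ℝ) + 1 - i) / ((n:ℝ) + 1)) * F0 + ((i:ℝ) / ((n:ℝ) + 1)) * FN := by
  have hn1 : (0:ℝ) < (n:ℝ) + 1 := by positivity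
  have hgap : ((n:ℝ) + 1) * ε < FN - F0 := by
    have := (lt_div_iff₀ hε).mp hQ
    linarith
  set g : ℕ → ℝ := fun i => u (i+1) - u i with hg
  -- concavity
  have hconc : ∀ j, j + 1 ≤ n → g (j+1) ≤ g j := by
    intro j hj
    have h := hdpp (j+1) (by omega) (by omega)
    simp only [Nat.add_sub_cancel] at h
    have h2 : (u j + u (j+2)) / 2 ≤ u (j+1) := by
      rw [h]; exact le_max_right _ _
    simp only [hg]
    have : j + 1 + 1 = j + 2 := by omega
    rw [this]
    linarith
  have hanti : ∀ j k, j ≤ k → k ≤ n → g k ≤ g j := by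
    intro j k hjk hk
    induction k with
    | zero => interval_cases j; exact le_refl _
    | succ m ih =>
      rcases Nat.lt_or_ge j (m+1) with h | h
      · exact le_trans (hconc m (by omega)) (ih (by omega) (by omega))
      · have : j = m + 1 := by omega
        subst this; exact le_refl _
  -- sum of increments
  have hsum : ∑ i ∈ Finset.range (n+1), g i = FN - F0 := by
    rw [Finset.sum_range_sub (f := u)]
    rw [h0, hN]
  have hg0 : ε < g 0 := by
    have hle : ∑ i ∈ Finset.range (n+1), g i ≤ ∑ _i ∈ Finset.range (n+1), g 0 := by
      apply Finset.sum_le_sum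
      intro i hi
      exact hanti 0 i (Nat.zero_le _) (by simpa [Finset.mem_range, Nat.lt_succ_iff] using hi)
    rw [Finset.sum_const, Finset.card_range, nsmul_eq_mul] at hle
    rw [hsum] at hle
    push_cast at hle
    nlinarith
  -- all increments equal
  have heqg : ∀ m, m ≤ n → g m = g 0 := by
    intro m hm
    induction m with
    | zero => rfl
    | succ m ih =>
      have ihm : g m = g 0 := ih (by omega)
      have h := hdpp (m+1) (by omega) hm
      simp only [Nat.add_sub_cancel] at h
      have hle : g (m+1) ≤ g m := hconc m hm
      rcases eq_or_lt_of_le hle with heq | hlt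
      · rw [heq, ihm]
      · exfalso
        -- u(m+1) strictly above average
        have havg : (u m + u (m+2)) / 2 < u (m+1) := by
          simp only [hg] at hlt
          have : m + 1 + 1 = m + 2 := by omega
          rw [this] at hlt
          linarith
        have hmax : u (m+1) = min (u m) (u (m+2)) + ε := by
          rcases max_choice (min (u m) (u (m+2)) + ε) ((u m + u (m+2)) / 2) with hc | hc
          · rw [h, hc]
          · rw [h, hc] at havg; linarith [havg]
        rcases min_choice (u m) (u (m+2)) with hc | hc
        · -- min = u m : g m = ε contradicts ε < g0 = g m
          rw [hc] at hmax
          have hgm : g m = ε := by simp only [hg]; linarith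
          rw [ihm] at hgm
          linarith
        · -- min = u (m+2) : g(m+1) = -ε but also g(m+1) < -g m
          rw [hc] at hmax
          have hmin : u (m+2) ≤ u m := by
            rw [← hc]; exact min_le_left _ _
          have hg1 : g (m+1) = -ε := by
            simp only [hg]
            have : m + 1 + 1 = m + 2 := by omega
            rw [this]
            linarith
          -- u(m+2) < u m case: need strict. If u(m+2) = u m then min = u m too, handled:
          have hsumlt : g m + g (m+1) ≤ 0 := by
            simp only [hg]
            have : m + 1 + 1 = m + 2 := by omega
            rw [this]
            linarith
          rw [hg1, ihm] at hsumlt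
          linarith
  have hg0val : g 0 = (FN - F0) / ((n:ℝ)+1) := by
    have : ∑ i ∈ Finset.range (n+1), g i = ((n:ℝ)+1) * g 0 := by
      rw [Finset.sum_congr rfl (fun i hi => heqg i (by simpa [Finset.mem_range, Nat.lt_succ_iff] using hi))]
      rw [Finset.sum_const, Finset.card_range]
      push_cast; ring
    rw [hsum] at this
    field_simp
    linarith
  -- u i = F0 + i * g 0
  have hui : ∀ i, i ≤ n + 1 → u i = F0 + (i:ℝ) * g 0 := by
    intro i hi
    induction i with
    | zero => simp [h0]
    | succ m ih =>
      have ihm := ih (by omega)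
      have : u (m+1) = u m + g m := by simp [hg]
      rw [this, heqg m (by omega), ihm]
      push_cast; ring
  intro i hi
  rw [hui i hi, hg0val]
  field_simp
  ring

theorem stmt_7 (n : ℕ) (hn : 2 ≤ n) (ε : ℝ) (hε : 0 < ε) (F0 FN : ℝ) (hF : F0 ≤ FN)
    (hQ : (FN - F0) / ε > (n:ℝ) + 1) :
    ∀ k : ℕ, 1 ≤ k → k ≤ n - 1 → ∀ j₁ j₂ : ℕ, j₁ < j₂ → j₂ ≤ n + 1 →
      (∃ u : ℕ → ℝ, u 0 = F0 ∧ u (n+1) = FN ∧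
        (∀ i, 1 ≤ i → i ≤ n →
          u i = max (min (u (i-1)) (u (i+1)) + ε) ((u (i-1) + u (i+1)) / 2))) ∧
      (∀ u : ℕ → ℝ, u 0 = F0 → u (n+1) = FN →
        (∀ i, 1 ≤ i → i ≤ n →
          u i = max (min (u (i-1)) (u (i+1)) + ε) ((u (i-1) + u (i+1)) / 2)) →
        ∀ i ≤ n + 1,
          u i = (((n:ℝ) + 1 - i) / ((n:ℝ) + 1)) * F0 + ((i:ℝ) / ((n:ℝ) + 1)) * FN) := by
  intro k hk1 hk2 j₁ j₂ hj hj2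
  have hn1 : (0:ℝ) < (n:ℝ) + 1 := by positivity
  have hgap : ((n:ℝ) + 1) * ε < FN - F0 := by
    have := (lt_div_iff₀ hε).mp hQ
    linarith
  set d : ℝ := (FN - F0) / ((n:ℝ) + 1) with hd
  have hεd : ε < d := by
    rw [hd, lt_div_iff₀ hn1]
    linarith
  constructor
  · refine ⟨fun i => F0 + (i:ℝ) * d, by simp, ?_, ?_⟩
    · show F0 + (((n+1 : ℕ)):ℝ) * d = FN
      rw [hd]
      push_cast
      field_simp
      ring
    · intro i hi1 hi2
      have hcast : ((i - 1 : ℕ) : ℝ) = (i:ℝ) - 1 := by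
        rw [Nat.cast_sub hi1]; norm_num
      simp only [hcast]
      push_cast
      have hmin : min (F0 + ((i:ℝ) - 1) * d) (F0 + ((i:ℝ) + 1) * d) = F0 + ((i:ℝ) - 1) * d := by
        apply min_eq_left
        nlinarith
      rw [hmin]
      rw [max_eq_right]
      · ring
      · nlinarith
  · intro u h0 hN hdpp
    exact stmt_7_uniq n ε hε F0 FN hQ u h0 hN hdpp
end

section
/- Let n ≥ 1, ε > 0, and let v : {0,...,n+1} → ℝ satisfy, for all 1 ≤ i ≤ n, min(max(v i - v (i-1), v i - v (i+1)) - ε, (v i - v (i-1)) + (v i - v (i+1))) ≥ 0. Set C = max over 0 ≤ i ≤ n+1 of |v i| (assume C > 0), fix δ > 0 with δ ≤ 1, and define ṽ i = (1+δ)·v i - (δ/(4C))·(v i)². Then for all 1 ≤ i ≤ n, max(ṽ i - ṽ (i-1), ṽ i - ṽ (i+1)) ≥ ε + (δ/2)·ε and (ṽ i - ṽ (i-1)) + (ṽ i - ṽ (i+1)) ≥ (δ/(4C))·ε². -/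
theorem stmt_8 (n : ℕ) (hn : 1 ≤ n) (ε : ℝ) (hε : 0 < ε) (v : ℕ → ℝ)
    (hv : ∀ i, 1 ≤ i → i ≤ n →
      0 ≤ min (max (v i - v (i-1)) (v i - v (i+1)) - ε)
              ((v i - v (i-1)) + (v i - v (i+1))))
    (C : ℝ)
    (hCdef : C = (Finset.range (n+2)).sup'
      (by simp : (Finset.range (n+2)).Nonempty) (fun i => |v i|))
    (hC : 0 < C)
    (δ : ℝ) (hδ : 0 < δ) (hδ1 : δ ≤ 1)
    (w : ℕ → ℝ) (hwdef : ∀ i, w i = (1 + δ) * v i - (δ / (4 * C)) * (v i)^2) :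
    ∀ i, 1 ≤ i → i ≤ n →
      max (w i - w (i-1)) (w i - w (i+1)) ≥ ε + (δ / 2) * ε ∧
      (w i - w (i-1)) + (w i - w (i+1)) ≥ (δ / (4 * C)) * ε^2 := by
  intro i h1 h2
  have hbd : ∀ j, j ≤ n + 1 → |v j| ≤ C := by
    intro j hj
    rw [hCdef]
    exact Finset.le_sup' (fun i => |v i|) (Finset.mem_range.mpr (by omega))
  have hx := hbd i (by omega)
  have hy := hbd (i - 1) (by omega)
  have hz := hbd (i + 1) (by omega)
  rw [abs_le] at hx hy hz
  have hmin := hv i h1 h2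
  rw [le_min_iff] at hmin
  obtain ⟨hmax, hsum⟩ := hmin
  have hmax' : ε ≤ v i - v (i-1) ∨ ε ≤ v i - v (i+1) := by
    rcases le_max_iff.mp (by linarith [hmax] : ε ≤ max (v i - v (i-1)) (v i - v (i+1))) with h | h
    · exact Or.inl h
    · exact Or.inr h
  set k := δ / (4 * C) with hkdef
  have h4C : (0:ℝ) < 4 * C := by linarith
  have hk : 0 < k := div_pos hδ h4C
  have hk4 : k * (4 * C) = δ := by rw [hkdef]; exact div_mul_cancel₀ δ (ne_of_gt h4C)
  rw [hwdef i, hwdef (i-1), hwdef (i+1)]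
  set x := v i
  set y := v (i-1)
  set z := v (i+1)
  constructor
  · rcases hmax' with h | h
    · apply le_max_of_le_left
      nlinarith [mul_nonneg hk.le (mul_nonneg (by linarith : (0:ℝ) ≤ x - y - ε) (by linarith : (0:ℝ) ≤ 2*C - x - y)),
        mul_nonneg hk.le (mul_nonneg hε.le (by linarith : (0:ℝ) ≤ 2*C - x - y))]
    · apply le_max_of_le_right
      nlinarith [mul_nonneg hk.le (mul_nonneg (by linarith : (0:ℝ) ≤ x - z - ε) (by linarith : (0:ℝ) ≤ 2*C - x - z)),
        mul_nonneg hk.le (mul_nonneg hε.le (by linarith : (0:ℝ) ≤ 2*C - x - z))]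
  · -- sum part: value = (a+b)(1+δ - δ x /(2C)) + k(a²+b²) with a = x-y, b = x-z
    have habs : ε^2 ≤ (x-y)^2 + (x-z)^2 := by
      rcases hmax' with h | h
      · nlinarith [sq_nonneg (x - z)]
      · nlinarith [sq_nonneg (x - y)]
    nlinarith [mul_nonneg hk.le (mul_nonneg (by linarith : (0:ℝ) ≤ (x-y)+(x-z)) (by linarith : (0:ℝ) ≤ 2*C - x)),
      mul_nonneg hδ.le (by linarith : (0:ℝ) ≤ (x-y)+(x-z)),
      mul_le_mul_of_nonneg_left habs hk.le]
end

section
/- Let ε > 0, δ > 0, C > 0, and let a, b, c ∈ ℝ with max(a - b, a - c) ≥ ε, (a - b) + (a - c) ≥ 0, and |a|, |b|, |c| ≤ C. Define g(α) = (1+δ)α - (δ/(4C))α². Then (g(a) - g(b)) + (g(a) - g(c)) ≥ (δ/(4C))·ε². -/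
theorem stmt_10 (ε δ C : ℝ) (hε : 0 < ε) (hδ : 0 < δ) (hC : 0 < C)
    (a b c : ℝ) (h1 : ε ≤ max (a - b) (a - c)) (h2 : 0 ≤ (a - b) + (a - c))
    (ha : |a| ≤ C) (hb : |b| ≤ C) (hc : |c| ≤ C)
    (g : ℝ → ℝ) (hg : ∀ α, g α = (1 + δ) * α - (δ / (4 * C)) * α^2) :
    (g a - g b) + (g a - g c) ≥ (δ / (4 * C)) * ε^2 := by
  rw [hg a, hg b, hg c]
  have haC : a ≤ C := (abs_le.mp ha).2
  have hd : 0 < δ / (4 * C) := by positivity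
  have hC0 : (4 * C : ℝ) ≠ 0 := by positivity
  set s := (a - b) + (a - c) with hs
  have key : ε^2 ≤ (a - b)^2 + (a - c)^2 := by
    rcases le_max_iff.mp h1 with h | h
    · nlinarith [sq_nonneg (a - c)]
    · nlinarith [sq_nonneg (a - b)]
  have hL : ((1 + δ) * a - (δ / (4 * C)) * a^2 - ((1 + δ) * b - (δ / (4 * C)) * b^2))
      + ((1 + δ) * a - (δ / (4 * C)) * a^2 - ((1 + δ) * c - (δ / (4 * C)) * c^2))
      = s * (1 + δ) - (δ / (4 * C)) * (2 * a * s) + (δ / (4 * C)) * ((a-b)^2 + (a-c)^2) := by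
    field_simp
    ring
  rw [hL]
  have hb1 : (δ/(4*C)) * (2 * a * s) ≤ (δ/(4*C)) * (2 * C * s) := by
    apply mul_le_mul_of_nonneg_left _ hd.le
    nlinarith
  have hb2 : (δ/(4*C)) * (2 * C * s) = (δ/2) * s := by
    field_simp
    ring
  have hb3 : (δ/(4*C)) * ε^2 ≤ (δ/(4*C)) * ((a-b)^2 + (a-c)^2) :=
    mul_le_mul_of_nonneg_left key hd.le
  nlinarith [mul_nonneg hδ.le h2]
end

section
/- Let ε > 0, λ₀, λ₁ ∈ ℝ with F₀ ≤ F_{n+1}, n ≥ 2, j₁ and j₂ integers with 0 ≤ j₁ < j₂ ≤ n+1 and j₂ - j₁ ≥ 2, and define u : {0,...,n+1} → ℝ by u i = F₀ + iε for 0 ≤ i ≤ j₁, u i = ((j₂ - i)/(j₂ - j₁))(F₀ + j₁ ε) + ((i - j₁)/(j₂ - j₁))(F_{n+1} + (n+1-j₂)ε) for j₁ < i < j₂, and u i = F_{n+1} + (n+1-i)ε for j₂ ≤ i ≤ n+1. Then u satisfies the DPP u i = max(min(u (i-1), u (i+1)) + ε, (u (i-1)+u (i+1))/2) for all i with j₁+1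 ≤ i ≤ j₂-1 if and only if |F_{n+1} - F₀ + (n+1-j₁-j₂)ε| ≥ ε(j₂ - j₁), i.e. (F_{n+1}-F₀)/ε ≤ 2j₁ - (n+1) or (F_{n+1}-F₀)/ε ≥ 2j₂ - (n+1). -/
theorem stmt_13 (n : ℕ) (hn : 2 ≤ n) (ε : ℝ) (hε : 0 < ε) (F0 FN : ℝ) (hF : F0 ≤ FN)
    (j₁ j₂ : ℕ) (hj : j₁ < j₂) (hj2 : j₂ ≤ n + 1) (hgap : j₁ + 2 ≤ j₂)
    (u : ℕ → ℝ)
    (hu1 : ∀ i ≤ j₁, u i = F0 + (i:ℝ) * ε)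
    (hu2 : ∀ i, j₁ < i → i < j₂ →
      u i = (((j₂:ℝ) - i) / ((j₂:ℝ) - j₁)) * (F0 + (j₁:ℝ) * ε)
          + (((i:ℝ) - j₁) / ((j₂:ℝ) - j₁)) * (FN + ((n:ℝ) + 1 - j₂) * ε))
    (hu3 : ∀ i, j₂ ≤ i → i ≤ n + 1 → u i = FN + ((n:ℝ) + 1 - i) * ε) :
    (∀ i, j₁ + 1 ≤ i → i ≤ j₂ - 1 →
      u i = max (min (u (i-1)) (u (i+1)) + ε) ((u (i-1) + u (i+1)) / 2))
    ↔ ε * ((j₂:ℝ) - j₁) ≤ |FN - F0 + ((n:ℝ) + 1 - j₁ - j₂) * ε| := by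
  have hjR : (j₁:ℝ) < j₂ := by exact_mod_cast hj
  have hd : (0:ℝ) < (j₂:ℝ) - j₁ := by linarith
  set A : ℝ := F0 + (j₁:ℝ) * ε with hA
  set B : ℝ := FN + ((n:ℝ) + 1 - j₂) * ε with hB
  set s : ℝ := (B - A) / ((j₂:ℝ) - j₁) with hs
  have hlin : ∀ k, j₁ ≤ k → k ≤ j₂ → u k = A + ((k:ℝ) - j₁) * s := by
    intro k hk1 hk2
    rcases eq_or_lt_of_le hk1 with h | h
    · rw [← h, hu1 j₁ le_rfl]; simp [hA]
    rcases eq_or_lt_of_le hk2 with h2 | h2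
    · rw [h2, hu3 j₂ le_rfl hj2, hs, ← hB]
      field_simp
      ring
    · rw [hu2 k h h2, hs]
      field_simp
      ring
  have key : ∀ i, j₁ + 1 ≤ i → i ≤ j₂ - 1 →
      ((u i = max (min (u (i-1)) (u (i+1)) + ε) ((u (i-1) + u (i+1)) / 2)) ↔ ε ≤ |s|) := by
    intro i h1 h2
    have hi1 : 1 ≤ i := by omega
    have c1 : ((i - 1 : ℕ) : ℝ) = (i:ℝ) - 1 := by
      push_cast [Nat.cast_sub hi1]; ring
    have e0 : u i = A + ((i:ℝ) - j₁) * s := hlin i (by omega) (by omega)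
    have e1 : u (i-1) = A + (((i:ℝ) - 1) - j₁) * s := by
      rw [hlin (i-1) (by omega) (by omega), c1]
    have e2 : u (i+1) = A + (((i:ℝ) + 1) - j₁) * s := by
      rw [hlin (i+1) (by omega) (by omega)]; push_cast; ring
    rw [e0, e1, e2]
    set x : ℝ := (i:ℝ) - j₁ with hx
    have hxm : ((i:ℝ) - 1) - j₁ = x - 1 := by rw [hx]; ring
    have hxp : ((i:ℝ) + 1) - j₁ = x + 1 := by rw [hx]; ring
    rw [hxm, hxp]
    rcases le_total 0 s with hs0 | hs0
    · rw [min_eq_left (by nlinarith), abs_of_nonneg hs0]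
      constructor
      · intro h
        have hle : A + (x-1)*s + ε ≤ max (A + (x-1)*s + ε) ((A + (x-1)*s + (A + (x+1)*s))/2) :=
          le_max_left _ _
        rw [← h] at hle; linarith
      · intro h
        rw [max_eq_right (by linarith)]; ring
    · rw [min_eq_right (by nlinarith), abs_of_nonpos hs0]
      constructor
      · intro h
        have hle : A + (x+1)*s + ε ≤ max (A + (x+1)*s + ε) ((A + (x-1)*s + (A + (x+1)*s))/2) :=
          le_max_left _ _
        rw [← h] at hle; linarith
      · intro h
        rw [max_eq_right (by linarith)]; ring
  have hBA : B - A = FN - F0 + ((n:ℝ) + 1 - j₁ - j₂) * ε := by rw [hA, hB]; ring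
  have habs : (ε ≤ |s|) ↔ ε * ((j₂:ℝ) - j₁) ≤ |FN - F0 + ((n:ℝ) + 1 - j₁ - j₂) * ε| := by
    rw [hs, abs_div, abs_of_pos hd, le_div_iff₀ hd, hBA, mul_comm]
  rw [← habs]
  constructor
  · intro H
    exact (key (j₁+1) le_rfl (by omega)).mp (H (j₁+1) le_rfl (by omega))
  · intro h i h1 h2
    exact (key i h1 h2).mpr h
end

section
/- Let Ω ⊆ ℝ^d be open, x̂ ∈ Ω, φ : Ω → ℝ twice continuously differentiable with ∇φ(x̂) ≠ 0. Suppose (x_ε)_{ε>0} is a family of points in Ω with x_ε → x̂ as ε → 0, and for each small ε > 0 let x_ε^min be a point of the closed ball B̄_ε(x_ε) at which φ attains its minimum over B̄_ε(x_ε). Then x_ε^min = x_ε - ε(∇φ(x_ε)/|∇φ(x_ε)| + o(1)) as ε → 0; that is, (x_ε - x_ε^min)/ε converges to ∇φ(x̂)/|∇φ(x̂)|. -/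
open Filter Metric

open scoped RealInnerProductSpace

set_option maxHeartbeats 1000000 in
lemma stmt_14_key {E : Type*} [NormedAddCommGroup E] [InnerProductSpace ℝ E]
    [CompleteSpace E]
    (φ : E → ℝ) (g : E) (hg : g ≠ 0) (δ ε : ℝ) (hδ : 0 < δ) (hε : 0 < ε)
    (c xm : E)
    (hdiff : ∀ y ∈ closedBall c ε,
      HasFDerivWithinAt φ (fderiv ℝ φ y) (closedBall c ε) y)
    (hbd : ∀ y ∈ closedBall c ε,
      ‖fderiv ℝ φ y - (InnerProductSpace.toDual ℝ E) g‖ ≤ δ)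
    (hxm : xm ∈ closedBall c ε)
    (hm : ∀ y ∈ closedBall c ε, φ xm ≤ φ y) :
    ‖ε⁻¹ • (c - xm) - ‖g‖⁻¹ • g‖ ^ 2 ≤ 4 * δ / ‖g‖ := by
  have hgn : (0:ℝ) < ‖g‖ := norm_pos_iff.2 hg
  set G := (InnerProductSpace.toDual ℝ E) g with hG
  set u := ‖g‖⁻¹ • g with hu
  have hun : ‖u‖ = 1 := by
    rw [hu, norm_smul, norm_inv, norm_norm, inv_mul_cancel₀ hgn.ne']
  have hGu : G u = ‖g‖ := by
    rw [hG, InnerProductSpace.toDual_apply_apply, hu, real_inner_smul_right,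
      real_inner_self_eq_norm_mul_norm, ← mul_assoc, inv_mul_cancel₀ hgn.ne', one_mul]
  set y₀ := c - ε • u with hy₀
  have hy₀mem : y₀ ∈ closedBall c ε := by
    rw [mem_closedBall, dist_eq_norm, hy₀]
    simp [norm_smul, abs_of_pos hε, hun, le_refl]
  have hconv : Convex ℝ (closedBall c ε) := convex_closedBall c ε
  have key : ∀ y ∈ closedBall c ε, ‖φ y - φ c - G (y - c)‖ ≤ δ * ‖y - c‖ :=
    fun y hy => hconv.norm_image_sub_le_of_norm_hasFDerivWithin_le' hdiff hbd
      (mem_closedBall_self hε.le) hy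
  have hxmd : ‖xm - c‖ ≤ ε := by
    rw [← dist_eq_norm]; exact mem_closedBall.1 hxm
  have h1 : ‖φ xm - φ c - G (xm - c)‖ ≤ δ * ε := by
    calc ‖φ xm - φ c - G (xm - c)‖ ≤ δ * ‖xm - c‖ := key xm hxm
    _ ≤ δ * ε := mul_le_mul_of_nonneg_left hxmd hδ.le
  have hy₀d : ‖y₀ - c‖ = ε := by
    rw [hy₀]; simp [norm_smul, abs_of_pos hε, hun]
  have h2 : ‖φ y₀ - φ c - G (y₀ - c)‖ ≤ δ * ε := by
    have := key y₀ hy₀mem; rwa [hy₀d] at this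
  have hGy₀ : G (y₀ - c) = -(ε * ‖g‖) := by
    rw [hy₀]
    have : c - ε • u - c = -(ε • u) := by abel
    rw [this, map_neg, map_smul, hGu]; simp
  have hle : φ xm ≤ φ y₀ := hm y₀ hy₀mem
  have h3 : G (xm - c) ≤ -(ε * ‖g‖) + 2 * δ * ε := by
    have a1 : -(δ * ε) ≤ φ xm - φ c - G (xm - c) :=
      neg_le_of_abs_le (by rw [← Real.norm_eq_abs]; exact h1)
    have a2 : φ y₀ - φ c - G (y₀ - c) ≤ δ * ε :=
      le_of_abs_le (by rw [← Real.norm_eq_abs]; exact h2)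
    rw [hGy₀] at a2; linarith
  have hinner : ⟪g, c - xm⟫ ≥ ε * ‖g‖ - 2 * δ * ε := by
    have e : G (xm - c) = -⟪g, c - xm⟫ := by
      rw [hG, InnerProductSpace.toDual_apply_apply, ← inner_neg_right]
      congr 1; abel
    rw [e] at h3; linarith
  set v := ε⁻¹ • (c - xm) with hv
  have hvn : ‖v‖ ≤ 1 := by
    rw [hv, norm_smul, norm_inv, Real.norm_eq_abs, abs_of_pos hε]
    calc ε⁻¹ * ‖c - xm‖ ≤ ε⁻¹ * ε := by
          apply mul_le_mul_of_nonneg_left _ (by positivity)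
          rw [norm_sub_rev]; exact hxmd
      _ = 1 := inv_mul_cancel₀ hε.ne'
  have hvin : ⟪v, u⟫ ≥ 1 - 2 * δ / ‖g‖ := by
    rw [hv, hu, real_inner_smul_left, real_inner_smul_right, real_inner_comm]
    have h4 : ε⁻¹ * (‖g‖⁻¹ * ⟪g, c - xm⟫) ≥ ε⁻¹ * (‖g‖⁻¹ * (ε * ‖g‖ - 2 * δ * ε)) := by
      have : (0:ℝ) ≤ ε⁻¹ * ‖g‖⁻¹ := by positivity
      nlinarith [hinner]
    calc ε⁻¹ * (‖g‖⁻¹ * ⟪g, c - xm⟫)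
        ≥ ε⁻¹ * (‖g‖⁻¹ * (ε * ‖g‖ - 2 * δ * ε)) := h4
      _ = 1 - 2 * δ / ‖g‖ := by field_simp
  have hsq : ‖v - u‖ ^ 2 = ‖v‖ ^ 2 - 2 * ⟪v, u⟫ + ‖u‖ ^ 2 := by
    rw [@norm_sub_sq_real]
  rw [hsq, hun]
  have hvs : ‖v‖ ^ 2 ≤ 1 := by nlinarith [norm_nonneg v]
  have h5 : 2 * ⟪v, u⟫ ≥ 2 - 4 * δ / ‖g‖ := by
    have e : 4 * δ / ‖g‖ = 2 * (2 * δ / ‖g‖) := by ring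
    rw [e]; linarith
  linarith

theorem stmt_14 (d : ℕ) (Ω : Set (EuclideanSpace ℝ (Fin d))) (hΩ : IsOpen Ω)
    (x₀ : EuclideanSpace ℝ (Fin d)) (hx₀ : x₀ ∈ Ω)
    (φ : EuclideanSpace ℝ (Fin d) → ℝ) (hφ : ContDiffOn ℝ 2 φ Ω)
    (hgrad : gradient φ x₀ ≠ 0)
    (x : ℝ → EuclideanSpace ℝ (Fin d))
    (hxΩ : ∀ᶠ ε in nhdsWithin (0:ℝ) (Set.Ioi 0), x ε ∈ Ω)
    (hxlim : Tendsto x (nhdsWithin (0:ℝ) (Set.Ioi 0)) (nhds x₀))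
    (xmin : ℝ → EuclideanSpace ℝ (Fin d))
    (hball : ∀ᶠ ε in nhdsWithin (0:ℝ) (Set.Ioi 0), closedBall (x ε) ε ⊆ Ω)
    (hmin : ∀ᶠ ε in nhdsWithin (0:ℝ) (Set.Ioi 0),
      xmin ε ∈ closedBall (x ε) ε ∧ ∀ y ∈ closedBall (x ε) ε, φ (xmin ε) ≤ φ y) :
    Tendsto (fun ε : ℝ => ε⁻¹ • (x ε - xmin ε)) (nhdsWithin (0:ℝ) (Set.Ioi 0))
      (nhds (‖gradient φ x₀‖⁻¹ • gradient φ x₀)) := by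
  set g := gradient φ x₀ with hg
  have hgn : (0:ℝ) < ‖g‖ := norm_pos_iff.2 hgrad
  have hφat : ContDiffAt ℝ 2 φ x₀ := hφ.contDiffAt (hΩ.mem_nhds hx₀)
  have hGdef : (InnerProductSpace.toDual ℝ (EuclideanSpace ℝ (Fin d))) g
      = fderiv ℝ φ x₀ := by
    rw [hg, gradient, LinearIsometryEquiv.apply_symm_apply]
  have hcont : ContinuousAt (fun y => fderiv ℝ φ y) x₀ :=
    (hφat.fderiv_right (m := 1) (by norm_num)).continuousAt
  rw [Metric.tendsto_nhds]
  intro η hη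
  set δ : ℝ := ‖g‖ * η ^ 2 / 8 with hδdef
  have hδ : 0 < δ := by positivity
  have hev1 : ∀ᶠ y in nhds x₀,
      ‖fderiv ℝ φ y - (InnerProductSpace.toDual ℝ (EuclideanSpace ℝ (Fin d))) g‖ ≤ δ := by
    have : ∀ᶠ y in nhds x₀, dist (fderiv ℝ φ y) (fderiv ℝ φ x₀) < δ :=
      hcont (Metric.ball_mem_nhds _ hδ)
    filter_upwards [this] with y hy
    rw [hGdef, ← dist_eq_norm]; exact hy.le
  have hnhds : {y | ‖fderiv ℝ φ y
      - (InnerProductSpace.toDual ℝ (EuclideanSpace ℝ (Fin d))) g‖ ≤ δ} ∩ Ω ∈ nhds x₀ :=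
    Filter.inter_mem hev1 (hΩ.mem_nhds hx₀)
  obtain ⟨r, hr, hrsub⟩ := Metric.mem_nhds_iff.1 hnhds
  have hεlim : Tendsto (fun ε : ℝ => ε) (nhdsWithin (0:ℝ) (Set.Ioi 0)) (nhds 0) :=
    Filter.tendsto_id.mono_right nhdsWithin_le_nhds
  have hev2 : ∀ᶠ ε in nhdsWithin (0:ℝ) (Set.Ioi 0), dist (x ε) x₀ < r / 2 :=
    Metric.tendsto_nhds.1 hxlim (r / 2) (by linarith)
  have hev3 : ∀ᶠ ε in nhdsWithin (0:ℝ) (Set.Ioi 0), dist ε 0 < r / 2 :=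
    Metric.tendsto_nhds.1 hεlim (r / 2) (by linarith)
  have hevpos : ∀ᶠ ε in nhdsWithin (0:ℝ) (Set.Ioi 0), ε ∈ Set.Ioi (0:ℝ) :=
    eventually_mem_nhdsWithin
  filter_upwards [hev2, hev3, hevpos, hmin] with ε hd hr2 hεmem hm
  have hεpos : (0:ℝ) < ε := hεmem
  have hεlt : ε < r / 2 := by
    have := hr2; rw [Real.dist_eq, sub_zero, abs_of_pos hεpos] at this; exact this
  have hsub : closedBall (x ε) ε ⊆ ball x₀ r := fun y hy => by
    rw [mem_ball]
    calc dist y x₀ ≤ dist y (x ε) + dist (x ε) x₀ := dist_triangle _ _ _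
      _ < r / 2 + r / 2 :=
          add_lt_add_of_le_of_lt ((mem_closedBall.1 hy).trans hεlt.le) hd
      _ = r := by ring
  have hsubΩ : closedBall (x ε) ε ⊆ Ω := fun y hy => (hrsub (hsub hy)).2
  have hbd : ∀ y ∈ closedBall (x ε) ε,
      ‖fderiv ℝ φ y - (InnerProductSpace.toDual ℝ (EuclideanSpace ℝ (Fin d))) g‖ ≤ δ :=
    fun y hy => (hrsub (hsub hy)).1
  have hdiff : ∀ y ∈ closedBall (x ε) ε,
      HasFDerivWithinAt φ (fderiv ℝ φ y) (closedBall (x ε) ε) y := by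
    intro y hy
    have hyΩ : y ∈ Ω := hsubΩ hy
    have hdy : DifferentiableAt ℝ φ y :=
      (hφ.contDiffAt (hΩ.mem_nhds hyΩ)).differentiableAt (by norm_num)
    exact hdy.hasFDerivAt.hasFDerivWithinAt
  have hkey := stmt_14_key φ g hgrad δ ε hδ hεpos (x ε) (xmin ε) hdiff hbd hm.1 hm.2
  have h4δ : 4 * δ / ‖g‖ = η ^ 2 / 2 := by
    rw [hδdef]; field_simp; ring
  rw [h4δ] at hkey
  rw [dist_eq_norm]
  have hnn : (0:ℝ) ≤ ‖ε⁻¹ • (x ε - xmin ε) - ‖g‖⁻¹ • g‖ := norm_nonneg _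
  nlinarith [hkey, hnn, hη]
end

section
/- Let n ≥ 2, ε > 0, and integers k, j₂ with j₂ = k+1, 1 ≤ k ≤ n-1. Suppose F_{n+1} = F₀ + (2j₂ - n - 1)ε. Define u : {0,...,n+1} → ℝ by u i = F₀ + iε for 0 ≤ i ≤ j₂ - 1 and u i = F_{n+1} + (n+1-i)ε for j₂ ≤ i ≤ n+1. Then u is well defined (the two formulas agree where both ranges could apply after the identity is used), u 0 = F₀, u (n+1) = F_{n+1}, and u solves the DPP u i = max(min(u (i-1), u (i+1)) + ε, (u (i-1)+u (i+1))/2) for all 1 ≤ i ≤ n. -/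
theorem stmt_19 (n : ℕ) (hn : 2 ≤ n) (ε : ℝ) (hε : 0 < ε)
    (k j₂ : ℕ) (hj₂ : j₂ = k + 1) (hk1 : 1 ≤ k) (hk2 : k ≤ n - 1)
    (F0 FN : ℝ) (hFN : FN = F0 + (2 * (j₂:ℝ) - n - 1) * ε)
    (u : ℕ → ℝ)
    (hu1 : ∀ i < j₂, u i = F0 + (i:ℝ) * ε)
    (hu2 : ∀ i, j₂ ≤ i → i ≤ n + 1 → u i = FN + ((n:ℝ) + 1 - i) * ε) :
    u 0 = F0 ∧ u (n+1) = FN ∧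
    ∀ i, 1 ≤ i → i ≤ n →
      u i = max (min (u (i-1)) (u (i+1)) + ε) ((u (i-1) + u (i+1)) / 2) := by
  have hj₂n : j₂ ≤ n := by omega
  have hA : ∀ i ≤ j₂, u i = F0 + (i:ℝ) * ε := by
    intro i hi
    rcases lt_or_eq_of_le hi with h | h
    · exact hu1 i h
    · subst h
      rw [hu2 i le_rfl (by omega), hFN]; ring
  refine ⟨by simpa using hA 0 (by omega), by
      rw [hu2 (n+1) (by omega) le_rfl]; push_cast; ring, ?_⟩
  intro i h1 hle
  rcases lt_trichotomy i j₂ with h | h | h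
  · have e0 : u i = F0 + (i:ℝ) * ε := hA _ (by omega)
    have e1 : u (i-1) = F0 + ((i:ℝ) - 1) * ε := by
      rw [hA _ (by omega), Nat.cast_sub h1]; norm_num
    have e2 : u (i+1) = F0 + ((i:ℝ) + 1) * ε := by
      rw [hA _ (by omega)]; push_cast; ring
    rw [e0, e1, e2,
      min_eq_left (by nlinarith),
      show F0 + ((i:ℝ) - 1) * ε + ε = F0 + (i:ℝ) * ε by ring,
      show (F0 + ((i:ℝ) - 1) * ε + (F0 + ((i:ℝ) + 1) * ε)) / 2 = F0 + (i:ℝ) * ε by ring,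
      max_self]
  · subst h
    have e0 : u i = F0 + (i:ℝ) * ε := hA _ le_rfl
    have e1 : u (i-1) = F0 + ((i:ℝ) - 1) * ε := by
      rw [hA _ (by omega), Nat.cast_sub h1]; norm_num
    have e2 : u (i+1) = F0 + ((i:ℝ) - 1) * ε := by
      rw [hu2 _ (by omega) (by omega), hFN]; push_cast; ring
    rw [e0, e1, e2, min_self,
      max_eq_left (by nlinarith)]
    ring
  · have e0 : u i = FN + ((n:ℝ) + 1 - i) * ε := hu2 _ (by omega) (by omega)
    have e1 : u (i-1) = FN + ((n:ℝ) + 2 - i) * ε := by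
      rw [hu2 _ (by omega) (by omega), Nat.cast_sub h1]; ring
    have e2 : u (i+1) = FN + ((n:ℝ) - i) * ε := by
      rw [hu2 _ (by omega) (by omega)]; push_cast; ring
    rw [e0, e1, e2,
      min_eq_right (by nlinarith),
      show FN + ((n:ℝ) - i) * ε + ε = FN + ((n:ℝ) + 1 - i) * ε by ring,
      show (FN + ((n:ℝ) + 2 - i) * ε + (FN + ((n:ℝ) - i) * ε)) / 2 = FN + ((n:ℝ) + 1 - i) * ε by ring,
      max_self]
end
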